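/- The Nadeau–Tewari poset P_n on nonincreasing integer sequences of length n, where u ⊴ v iff u_i ≤ v_i for all i and every descent of v (i.e., index i with v_i > v_{i+1}) is a descent of u, is a lattice. Moreover, the join of u and v is the componentwise smallest nonincreasing sequence w with w ≥ u, w ≥ v componentwise whose descent set is contained in the intersection of the descent sets of u and v. -/

import Mathlib

/-- `u` has a descent at index `i` (with `i+1 < n`). -/
def Desc {n : ℕ} (u : Fin n → ℤ) (i : ℕ) (h : i + 1 < n) : Prop :=
  u ⟨i + 1, h⟩ < u ⟨i, Nat.lt_of_succ_lt h⟩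

/-- The Nadeau–Tewari order on nonincreasing integer sequences of length `n`. -/
def NTle {n : ℕ} (u v : Fin n → ℤ) : Prop :=
  (∀ i, u i ≤ v i) ∧ ∀ (i : ℕ) (h : i + 1 < n), Desc v i h → Desc u i h

open scoped Classical

namespace NTaux

variable {n : ℕ}

lemma antitone_of_step {f : Fin n → ℤ}
    (h : ∀ (i : ℕ) (hi : i + 1 < n), f ⟨i + 1, hi⟩ ≤ f ⟨i, Nat.lt_of_succ_lt hi⟩) :
    Antitone f := by
  have key : ∀ (a b : ℕ), a ≤ b → ∀ (hb : b < n) (ha : a < n), f ⟨b, hb⟩ ≤ f ⟨a, ha⟩ := by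
    intro a b hab
    induction b, hab using Nat.le_induction with
    | base => intro hb ha; exact le_of_eq (by congr)
    | succ b hab ih =>
        intro hb ha
        exact (h b hb).trans (ih (Nat.lt_of_succ_lt hb) ha)
  intro x y hxy
  have := key x.val y.val hxy y.isLt x.isLt
  simpa using this

lemma le_of_no_descent {z : Fin n → ℤ} (hz : Antitone z) :
    ∀ (a b : ℕ), a ≤ b → ∀ (hb : b < n) (ha : a < n),
      (∀ (k : ℕ) (hk : k + 1 < n), a ≤ k → k < b → ¬ Desc z k hk) →
      z ⟨a, ha⟩ ≤ z ⟨b, hb⟩ := by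
  intro a b hab
  induction b, hab using Nat.le_induction with
  | base => intro hb ha _; exact le_of_eq (by congr)
  | succ b hab ih =>
      intro hb ha hnd
      have hb' : b < n := Nat.lt_of_succ_lt hb
      have h1 : z ⟨a, ha⟩ ≤ z ⟨b, hb'⟩ :=
        ih hb' ha (fun k hk hk1 hk2 => hnd k hk hk1 (by omega))
      have h2 : ¬ Desc z b hb := hnd b hb hab (by omega)
      rw [Desc, not_lt] at h2
      exact h1.trans h2

/-! ### Join -/

/-- common descent -/
def CDp (u v : Fin n → ℤ) (k : ℕ) : Prop :=
  ∃ hk : k + 1 < n, Desc u k hk ∧ Desc v k hk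

noncomputable def JS (u v : Fin n → ℤ) (i : Fin n) : Finset (Fin n) :=
  Finset.univ.filter (fun j =>
    ∀ k : ℕ, min i.val j.val ≤ k → k < max i.val j.val → ¬ CDp u v k)

lemma self_mem_JS (u v : Fin n → ℤ) (i : Fin n) : i ∈ JS u v i := by
  simp only [JS, Finset.mem_filter, Finset.mem_univ, true_and]
  intro k h1 h2
  exfalso; omega

lemma mem_JS_iff {u v : Fin n → ℤ} {i j : Fin n} :
    j ∈ JS u v i ↔ ∀ k : ℕ, min i.val j.val ≤ k → k < max i.val j.val → ¬ CDp u v k := by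
  simp only [JS, Finset.mem_filter, Finset.mem_univ, true_and]

noncomputable def Mx (u v : Fin n → ℤ) : Fin n → ℤ := fun j => max (u j) (v j)

noncomputable def JW (u v : Fin n → ℤ) (i : Fin n) : ℤ :=
  (JS u v i).sup' ⟨i, self_mem_JS u v i⟩ (Mx u v)

lemma le_JW (u v : Fin n → ℤ) (i : Fin n) {j : Fin n} (hj : j ∈ JS u v i) :
    Mx u v j ≤ JW u v i :=
  Finset.le_sup' _ hj

lemma Mx_antitone {u v : Fin n → ℤ} (hu : Antitone u) (hv : Antitone v) :
    Antitone (Mx u v) := hu.max hv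

lemma Mx_strict {u v : Fin n → ℤ} (i : ℕ) (h : i + 1 < n)
    (hcd : CDp u v i) : Mx u v ⟨i + 1, h⟩ < Mx u v ⟨i, Nat.lt_of_succ_lt h⟩ := by
  obtain ⟨hk, h1, h2⟩ := hcd
  exact max_lt_max h1 h2

lemma JW_succ_le {u v : Fin n → ℤ} (hu : Antitone u) (hv : Antitone v)
    (i : ℕ) (h : i + 1 < n) :
    JW u v ⟨i + 1, h⟩ ≤ JW u v ⟨i, Nat.lt_of_succ_lt h⟩ := by
  apply Finset.sup'_le
  intro j hj
  rw [mem_JS_iff] at hj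
  by_cases hcd : CDp u v i
  · have hij : i + 1 ≤ j.val := by
      by_contra hc
      exact hj i (by simp only [Fin.val_mk]; omega) (by simp only [Fin.val_mk]; omega) hcd
    calc Mx u v j ≤ Mx u v ⟨i + 1, h⟩ := Mx_antitone hu hv hij
      _ ≤ Mx u v ⟨i, Nat.lt_of_succ_lt h⟩ := le_of_lt (Mx_strict i h hcd)
      _ ≤ JW u v ⟨i, Nat.lt_of_succ_lt h⟩ := le_JW _ _ _ (self_mem_JS _ _ _)
  · apply le_JW
    rw [mem_JS_iff]
    intro k h1 h2
    by_cases hki : k = i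
    · subst hki; exact hcd
    · exact hj k (by simp only [Fin.val_mk] at h1 h2 ⊢; omega) (by simp only [Fin.val_mk] at h1 h2 ⊢; omega)

lemma JW_le_succ {u v : Fin n → ℤ} (i : ℕ) (h : i + 1 < n) (hcd : ¬ CDp u v i) :
    JW u v ⟨i, Nat.lt_of_succ_lt h⟩ ≤ JW u v ⟨i + 1, h⟩ := by
  apply Finset.sup'_le
  intro j hj
  rw [mem_JS_iff] at hj
  apply le_JW
  rw [mem_JS_iff]
  intro k h1 h2
  by_cases hki : k = i
  · subst hki; exact hcd
  · exact hj k (by simp at h1 h2 ⊢; omega) (by simp at h1 h2 ⊢; omega)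

lemma JW_strict {u v : Fin n → ℤ} (hu : Antitone u) (hv : Antitone v)
    (i : ℕ) (h : i + 1 < n) (hcd : CDp u v i) :
    JW u v ⟨i + 1, h⟩ < JW u v ⟨i, Nat.lt_of_succ_lt h⟩ := by
  rw [JW]
  apply (Finset.sup'_lt_iff _).2
  intro j hj
  rw [mem_JS_iff] at hj
  have hij : i + 1 ≤ j.val := by
    by_contra hc
    exact hj i (by simp only [Fin.val_mk]; omega) (by simp only [Fin.val_mk]; omega) hcd
  calc Mx u v j ≤ Mx u v ⟨i + 1, h⟩ := Mx_antitone hu hv hij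
    _ < Mx u v ⟨i, Nat.lt_of_succ_lt h⟩ := Mx_strict i h hcd
    _ ≤ JW u v ⟨i, Nat.lt_of_succ_lt h⟩ := le_JW _ _ _ (self_mem_JS _ _ _)

lemma u_le_JW (u v : Fin n → ℤ) (i : Fin n) : u i ≤ JW u v i :=
  le_trans (le_max_left _ _) (le_JW _ _ _ (self_mem_JS u v i))

lemma v_le_JW (u v : Fin n → ℤ) (i : Fin n) : v i ≤ JW u v i :=
  le_trans (le_max_right _ _) (le_JW _ _ _ (self_mem_JS u v i))

lemma JW_desc {u v : Fin n → ℤ} (i : ℕ) (h : i + 1 < n)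
    (hd : Desc (JW u v) i h) : Desc u i h ∧ Desc v i h := by
  by_contra hc
  have hcd : ¬ CDp u v i := by
    rintro ⟨hk, h1, h2⟩
    exact hc ⟨h1, h2⟩
  exact (JW_le_succ i h hcd).not_gt hd

lemma JW_min {u v : Fin n → ℤ} (z : Fin n → ℤ) (hz : Antitone z)
    (h1 : ∀ i, u i ≤ z i) (h2 : ∀ i, v i ≤ z i)
    (h3 : ∀ (i : ℕ) (h : i + 1 < n), Desc z i h → Desc u i h ∧ Desc v i h)
    (i : Fin n) : JW u v i ≤ z i := by
  apply Finset.sup'_le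
  intro j hj
  rw [mem_JS_iff] at hj
  have hMz : Mx u v j ≤ z j := max_le (h1 j) (h2 j)
  rcases le_or_gt i j with hij | hij
  · exact hMz.trans (hz hij)
  · have hji : j.val < i.val := hij
    have key : z ⟨j.val, j.isLt⟩ ≤ z ⟨i.val, i.isLt⟩ := by
      apply le_of_no_descent hz j.val i.val (le_of_lt hji) i.isLt j.isLt
      intro k hk hk1 hk2 hdz
      exact hj k (by omega) (by omega) ⟨hk, h3 k hk hdz⟩
    simp only [Fin.eta] at key
    exact hMz.trans key

/-! ### Meet -/

noncomputable def dstep (u v : Fin n → ℤ) (k : ℕ) : ℤ :=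
  if h : k + 1 < n then (if Desc u k h ∨ Desc v k h then 1 else 0) else 0

lemma dstep_nonneg (u v : Fin n → ℤ) (k : ℕ) : 0 ≤ dstep u v k := by
  rw [dstep]; split_ifs <;> norm_num

lemma dstep_eq_one {u v : Fin n → ℤ} {k : ℕ} (h : k + 1 < n)
    (hd : Desc u k h ∨ Desc v k h) : dstep u v k = 1 := by
  rw [dstep, dif_pos h, if_pos hd]

lemma dstep_eq_zero {u v : Fin n → ℤ} {k : ℕ} (h : k + 1 < n)
    (hd : ¬ (Desc u k h ∨ Desc v k h)) : dstep u v k = 0 := by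
  rw [dstep, dif_pos h, if_neg hd]

noncomputable def DD (u v : Fin n → ℤ) (j i : ℕ) : ℤ := ∑ k ∈ Finset.Ico j i, dstep u v k

lemma DD_self (u v : Fin n → ℤ) (j : ℕ) : DD u v j j = 0 := by simp [DD]

lemma DD_succ (u v : Fin n → ℤ) {j i : ℕ} (hji : j ≤ i) :
    DD u v j (i + 1) = DD u v j i + dstep u v i :=
  Finset.sum_Ico_succ_top hji _

noncomputable def mn (u v : Fin n → ℤ) : Fin n → ℤ := fun j => min (u j) (v j)

noncomputable def MW (u v : Fin n → ℤ) (i : Fin n) : ℤ :=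
  (Finset.univ.filter (fun j : Fin n => j ≤ i)).inf' ⟨i, by simp⟩
    (fun j => mn u v j - DD u v j.val i.val)

lemma MW_le (u v : Fin n → ℤ) (i : Fin n) {j : Fin n} (hj : j ≤ i) :
    MW u v i ≤ mn u v j - DD u v j.val i.val :=
  Finset.inf'_le _ (by simp [hj])

lemma MW_le_mn (u v : Fin n → ℤ) (i : Fin n) : MW u v i ≤ mn u v i := by
  have := MW_le u v i (le_refl i)
  rwa [DD_self, sub_zero] at this

lemma MW_succ_le (u v : Fin n → ℤ) (i : ℕ) (h : i + 1 < n) :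
    MW u v ⟨i + 1, h⟩ ≤ MW u v ⟨i, Nat.lt_of_succ_lt h⟩ - dstep u v i := by
  have hne : ((Finset.univ.filter (fun j : Fin n => j ≤ ⟨i, Nat.lt_of_succ_lt h⟩))).Nonempty :=
    ⟨⟨i, Nat.lt_of_succ_lt h⟩, by simp⟩
  obtain ⟨j0, hj0, he⟩ := Finset.exists_mem_eq_inf' hne
    (fun j : Fin n => mn u v j - DD u v j.val i)
  have hMW : MW u v ⟨i, Nat.lt_of_succ_lt h⟩ = mn u v j0 - DD u v j0.val i := he
  rw [Finset.mem_filter] at hj0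
  have hj0i : j0.val ≤ i := hj0.2
  have h1 : MW u v ⟨i + 1, h⟩ ≤ mn u v j0 - DD u v j0.val (i + 1) :=
    MW_le u v ⟨i + 1, h⟩ (show j0 ≤ ⟨i + 1, h⟩ from by
      simp only [Fin.le_def]; omega)
  rw [DD_succ u v hj0i] at h1
  rw [hMW]
  linarith

lemma MW_le_succ {u v : Fin n → ℤ} (hu : Antitone u) (hv : Antitone v)
    (i : ℕ) (h : i + 1 < n) (hnd : ¬ (Desc u i h ∨ Desc v i h)) :
    MW u v ⟨i, Nat.lt_of_succ_lt h⟩ ≤ MW u v ⟨i + 1, h⟩ := by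
  apply Finset.le_inf'
  intro j hj
  rw [Finset.mem_filter] at hj
  have hji : j.val ≤ i + 1 := hj.2
  rcases Nat.lt_or_ge j.val (i + 1) with hc | hc
  · have hji' : j.val ≤ i := by omega
    have h1 : MW u v ⟨i, Nat.lt_of_succ_lt h⟩ ≤ mn u v j - DD u v j.val i :=
      MW_le u v _ (show j ≤ ⟨i, Nat.lt_of_succ_lt h⟩ from by simp only [Fin.le_def]; omega)
    rw [DD_succ u v hji', dstep_eq_zero h hnd]
    linarith
  · have hji2 : j.val = i + 1 := by omega
    push_neg at hnd
    obtain ⟨hnd1, hnd2⟩ := hnd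
    rw [Desc, not_lt] at hnd1 hnd2
    have hle : (⟨i, Nat.lt_of_succ_lt h⟩ : Fin n) ≤ ⟨i + 1, h⟩ := by
      simp only [Fin.le_def]; omega
    have hu1 : u ⟨i, Nat.lt_of_succ_lt h⟩ = u ⟨i + 1, h⟩ := le_antisymm hnd1 (hu hle)
    have hv1 : v ⟨i, Nat.lt_of_succ_lt h⟩ = v ⟨i + 1, h⟩ := le_antisymm hnd2 (hv hle)
    have hjeq : j = ⟨i + 1, h⟩ := Fin.ext hji2
    subst hjeq
    have h2 : DD u v (i + 1) (i + 1) = 0 := DD_self u v _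
    have h3 : mn u v ⟨i + 1, h⟩ = mn u v ⟨i, Nat.lt_of_succ_lt h⟩ := by
      simp only [mn]; rw [hu1, hv1]
    have h4 := MW_le_mn u v ⟨i, Nat.lt_of_succ_lt h⟩
    simp only [h2, h3]
    linarith

lemma z_key {u v : Fin n → ℤ} (z : Fin n → ℤ) (hz : Antitone z)
    (hd : ∀ (k : ℕ) (hk : k + 1 < n), (Desc u k hk ∨ Desc v k hk) → Desc z k hk) :
    ∀ (j i : ℕ), j ≤ i → ∀ (hi : i < n) (hj : j < n),
      z ⟨i, hi⟩ + DD u v j i ≤ z ⟨j, hj⟩ := by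
  intro j i hji
  induction i, hji using Nat.le_induction with
  | base => intro hi hj; rw [DD_self, add_zero]
  | succ i hji ih =>
      intro hi hj
      have hi' : i < n := Nat.lt_of_succ_lt hi
      rw [DD_succ u v hji]
      have step : z ⟨i + 1, hi⟩ + dstep u v i ≤ z ⟨i, hi'⟩ := by
        by_cases hdc : Desc u i hi ∨ Desc v i hi
        · rw [dstep_eq_one hi hdc]
          have hzi : z ⟨i + 1, hi⟩ < z ⟨i, hi'⟩ := hd i hi hdc
          omega
        · rw [dstep_eq_zero hi hdc]
          have : z ⟨i + 1, hi⟩ ≤ z ⟨i, hi'⟩ := hz (by simp only [Fin.le_def]; omega)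
          omega
      have := ih hi' hj
      linarith

lemma MW_antitone (u v : Fin n → ℤ) : Antitone (MW u v) := by
  apply antitone_of_step
  intro i hi
  have := MW_succ_le u v i hi
  have hnn := dstep_nonneg u v i
  linarith

lemma MW_desc_of {u v : Fin n → ℤ} (i : ℕ) (h : i + 1 < n)
    (hd : Desc u i h ∨ Desc v i h) : Desc (MW u v) i h := by
  have h1 := MW_succ_le u v i h
  rw [dstep_eq_one h hd] at h1
  show MW u v ⟨i + 1, h⟩ < MW u v ⟨i, Nat.lt_of_succ_lt h⟩
  linarith

lemma MW_desc_only {u v : Fin n → ℤ} (hu : Antitone u) (hv : Antitone v)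
    (i : ℕ) (h : i + 1 < n) (hd : Desc (MW u v) i h) :
    Desc u i h ∨ Desc v i h := by
  by_contra hc
  exact (MW_le_succ hu hv i h hc).not_gt hd

end NTaux


open NTaux in
/-- The Nadeau–Tewari poset on nonincreasing sequences of length `n` is a lattice, and
the join of `u` and `v` is the componentwise smallest nonincreasing sequence, componentwise
above both, whose descent set is contained in the intersection of their descent sets. -/
theorem stmt2 (n : ℕ) :
    (∀ u v : Fin n → ℤ, Antitone u → Antitone v →
      ∃ w : Fin n → ℤ, Antitone w ∧
        -- `w` is the join of `u` and `v`
        NTle u w ∧ NTle v w ∧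
        (∀ z : Fin n → ℤ, Antitone z → NTle u z → NTle v z → NTle w z) ∧
        -- `w` is componentwise above `u` and `v`, its descents are common descents of `u,v`,
        -- and it is componentwise smallest with these properties
        (∀ i, u i ≤ w i) ∧ (∀ i, v i ≤ w i) ∧
        (∀ (i : ℕ) (h : i + 1 < n), Desc w i h → Desc u i h ∧ Desc v i h) ∧
        (∀ z : Fin n → ℤ, Antitone z → (∀ i, u i ≤ z i) → (∀ i, v i ≤ z i) →
          (∀ (i : ℕ) (h : i + 1 < n), Desc z i h → Desc u i h ∧ Desc v i h) →
          ∀ i, w i ≤ z i)) ∧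
    -- meets exist as well
    (∀ u v : Fin n → ℤ, Antitone u → Antitone v →
      ∃ w : Fin n → ℤ, Antitone w ∧ NTle w u ∧ NTle w v ∧
        ∀ z : Fin n → ℤ, Antitone z → NTle z u → NTle z v → NTle z w) := by
  constructor
  · intro u v hu hv
    refine ⟨JW u v, ?_, ?_, ?_, ?_, ?_, ?_, ?_, ?_⟩
    · exact antitone_of_step (fun i hi => JW_succ_le hu hv i hi)
    · exact ⟨u_le_JW u v, fun i h hd => (JW_desc i h hd).1⟩
    · exact ⟨v_le_JW u v, fun i h hd => (JW_desc i h hd).2⟩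
    · rintro z hz ⟨hzu1, hzu2⟩ ⟨hzv1, hzv2⟩
      constructor
      · exact JW_min z hz hzu1 hzv1 (fun i h hd => ⟨hzu2 i h hd, hzv2 i h hd⟩)
      · intro i h hd
        exact JW_strict hu hv i h ⟨h, hzu2 i h hd, hzv2 i h hd⟩
    · exact u_le_JW u v
    · exact v_le_JW u v
    · exact fun i h hd => JW_desc i h hd
    · exact fun z hz h1 h2 h3 i => JW_min z hz h1 h2 h3 i
  · intro u v hu hv
    refine ⟨MW u v, MW_antitone u v, ?_, ?_, ?_⟩
    · exact ⟨fun i => le_trans (MW_le_mn u v i) (min_le_left _ _),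
        fun i h hd => MW_desc_of i h (Or.inl hd)⟩
    · exact ⟨fun i => le_trans (MW_le_mn u v i) (min_le_right _ _),
        fun i h hd => MW_desc_of i h (Or.inr hd)⟩
    · rintro z hz ⟨hzu1, hzu2⟩ ⟨hzv1, hzv2⟩
      constructor
      · intro i
        apply Finset.le_inf'
        intro j hj
        rw [Finset.mem_filter] at hj
        have hji : j.val ≤ i.val := hj.2
        have key := z_key z hz
          (fun k hk hdk => hdk.elim (hzu2 k hk) (hzv2 k hk)) j.val i.val hji i.isLt j.isLt
        simp only [Fin.eta] at key
        have hzj : z j ≤ mn u v j := le_min (hzu1 j) (hzv1 j)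
        linarith
      · intro i h hd
        exact (MW_desc_only hu hv i h hd).elim (hzu2 i h) (hzv2 i h)
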